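/- Let A be a real symmetric n×n matrix and v ∈ ℝⁿ. Then the eigenvalues of A interlace those of A + v vᵗ: if λ₁ ≥ ... ≥ λₙ are the eigenvalues of A and μ₁ ≥ ... ≥ μₙ those of A + vvᵗ, then μ₁ ≥ λ₁ ≥ μ₂ ≥ λ₂ ≥ ... ≥ μₙ ≥ λₙ. -/

import Mathlib

open Matrix Polynomial Finset
open scoped RealInnerProductSpace

variable {n : ℕ}



lemma charpoly_diag (d : Fin n → ℝ) :
    (Matrix.diagonal d).charpoly = ∏ i, (X - C (d i)) := by
  rw [Matrix.charpoly]
  have h : charmatrix (Matrix.diagonal d) = Matrix.diagonal fun i => (X : ℝ[X]) - C (d i) := by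
    ext i j
    rcases eq_or_ne i j with rfl | h
    · simp
    · simp [Matrix.charmatrix_apply_ne _ _ _ h, Matrix.diagonal_apply_ne _ h]
  rw [h, Matrix.det_diagonal]

lemma charpoly_conj_unitary (U M : Matrix (Fin n) (Fin n) ℝ)
    (hU : U ∈ Matrix.unitaryGroup (Fin n) ℝ) :
    (U * M * star U).charpoly = M.charpoly := by
  have h1 : U * star U = 1 := Matrix.mem_unitaryGroup_iff.mp hU
  have key : charmatrix (U * M * star U)
      = (C : ℝ →+* ℝ[X]).mapMatrix U * charmatrix M * (C : ℝ →+* ℝ[X]).mapMatrix (star U) := by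
    unfold charmatrix
    rw [mul_sub, sub_mul]
    congr 1
    · calc Matrix.scalar (Fin n) (X : ℝ[X])
          = Matrix.scalar (Fin n) (X : ℝ[X]) *
            ((C : ℝ →+* ℝ[X]).mapMatrix U * (C : ℝ →+* ℝ[X]).mapMatrix (star U)) := by
            rw [← _root_.map_mul, h1, _root_.map_one, mul_one]
        _ = (C : ℝ →+* ℝ[X]).mapMatrix U * Matrix.scalar (Fin n) (X : ℝ[X]) *
            (C : ℝ →+* ℝ[X]).mapMatrix (star U) := by
            rw [← mul_assoc, (Matrix.scalar_commute (X : ℝ[X])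
              (fun r' => mul_comm _ _) _).eq]
    · rw [← _root_.map_mul, ← _root_.map_mul]
  have h3 : (C : ℝ →+* ℝ[X]).mapMatrix U * (C : ℝ →+* ℝ[X]).mapMatrix (star U) = 1 := by
    rw [← _root_.map_mul, h1, _root_.map_one]
  rw [Matrix.charpoly, key, det_mul, det_mul, mul_right_comm, ← det_mul, h3, det_one, one_mul,
    Matrix.charpoly]

lemma charpoly_herm {A : Matrix (Fin n) (Fin n) ℝ} (hA : A.IsHermitian) :
    A.charpoly = ∏ i, (X - C (hA.eigenvalues i)) := by
  conv_lhs => rw [hA.spectral_theorem, Unitary.conjStarAlgAut_apply]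
  rw [charpoly_conj_unitary _ _ (Matrix.IsHermitian.eigenvectorUnitary hA).2]
  have h : (RCLike.ofReal ∘ hA.eigenvalues : Fin n → ℝ) = hA.eigenvalues := by
    funext i; simp
  rw [h, charpoly_diag]


lemma multiset_eq_of_prod_eq (f g : Fin n → ℝ)
    (h : ∏ i, (X - C (f i)) = ∏ i, (X - C (g i))) :
    Multiset.map f Finset.univ.val = Multiset.map g Finset.univ.val := by
  have key : ∀ (f : Fin n → ℝ),
      (Multiset.map (fun a => X - C a) (Multiset.map f Finset.univ.val)).prod
        = ∏ i, (X - C (f i)) := by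
    intro f; rw [Multiset.map_map]; rfl
  have := congrArg Polynomial.roots ((key f).trans (h.trans (key g).symm))
  rwa [Polynomial.roots_multiset_prod_X_sub_C, Polynomial.roots_multiset_prod_X_sub_C] at this

lemma card_filter_eq_of_map_eq {f g : Fin n → ℝ}
    (h : Multiset.map f Finset.univ.val = Multiset.map g Finset.univ.val)
    (p : ℝ → Prop) [DecidablePred p] :
    (Finset.univ.filter fun j => p (f j)).card = (Finset.univ.filter fun j => p (g j)).card := by
  have h2 := congrArg (Multiset.countP p) h
  rw [Multiset.countP_map, Multiset.countP_map] at h2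
  exact h2

lemma count_ge_of_antitone {l : Fin n → ℝ} (hl : Antitone l) (i : Fin n) (c : ℝ) (hc : c ≤ l i) :
    (i : ℕ) + 1 ≤ (Finset.univ.filter fun j => c ≤ l j).card := by
  calc (i : ℕ) + 1 = (Finset.Iic i).card := (Fin.card_Iic i).symm
    _ ≤ _ := Finset.card_le_card fun j hj => by
        simp only [Finset.mem_Iic] at hj
        simp only [Finset.mem_filter, Finset.mem_univ, true_and]
        exact le_trans hc (hl hj)

lemma count_le_of_antitone {l : Fin n → ℝ} (hl : Antitone l) (i : Fin n) (c : ℝ) (hc : l i ≤ c) :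
    n - (i : ℕ) ≤ (Finset.univ.filter fun j => l j ≤ c).card := by
  calc n - (i : ℕ) = (Finset.Ici i).card := (Fin.card_Ici i).symm
    _ ≤ _ := Finset.card_le_card fun j hj => by
        simp only [Finset.mem_Ici] at hj
        simp only [Finset.mem_filter, Finset.mem_univ, true_and]
        exact le_trans (hl hj) hc

lemma finrank_span_onb (b : OrthonormalBasis (Fin n) ℝ (EuclideanSpace ℝ (Fin n)))
    (S : Finset (Fin n)) :
    Module.finrank ℝ (Submodule.span ℝ (⇑b '' ↑S)) = S.card := by
  have li : LinearIndependent ℝ (fun j : (S : Set (Fin n)) => b j) :=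
    b.orthonormal.linearIndependent.comp _ Subtype.val_injective
  have himg : ⇑b '' ↑S = Set.range fun j : (S : Set (Fin n)) => b j := by
    rw [← Set.image_eq_range]
  rw [himg, finrank_span_eq_card li]
  simp

lemma finrank_inf_lower (W₁ W₂ : Submodule ℝ (EuclideanSpace ℝ (Fin n))) :
    Module.finrank ℝ W₁ + Module.finrank ℝ W₂ - n
      ≤ Module.finrank ℝ (W₁ ⊓ W₂ : Submodule ℝ _) := by
  have h := Submodule.finrank_sup_add_finrank_inf_eq W₁ W₂
  have h2 : Module.finrank ℝ (W₁ ⊔ W₂ : Submodule ℝ _) ≤ n := by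
    simpa using (W₁ ⊔ W₂).finrank_le
  omega

lemma exists_ne_zero_mem (W : Submodule ℝ (EuclideanSpace ℝ (Fin n)))
    (h : 0 < Module.finrank ℝ W) : ∃ x, x ∈ W ∧ x ≠ 0 := by
  apply Submodule.exists_mem_ne_zero_of_ne_bot
  intro hbot
  rw [hbot] at h
  simp at h

lemma dot_self_pos {x : EuclideanSpace ℝ (Fin n)} (hx : x ≠ 0) : 0 < x ⬝ᵥ x := by
  have h1 : x ⬝ᵥ x = ⟪x, x⟫ := by
    simp [dotProduct, PiLp.inner_apply, RCLike.inner_apply, mul_comm]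
    rw [EuclideanSpace.norm_sq_eq]; simp [sq]
  rw [h1]
  exact lt_of_le_of_ne real_inner_self_nonneg (Ne.symm (inner_self_ne_zero.mpr hx))


lemma dot_sums (w : Fin n → Fin n → ℝ)
    (horth : ∀ j k, w j ⬝ᵥ w k = if j = k then (1:ℝ) else 0) (d c : Fin n → ℝ) :
    (∑ j, d j • w j) ⬝ᵥ (∑ k, c k • w k) = ∑ j, d j * c j := by
  classical
  have h : ∀ j k, (∑ i, w j i * w k i) = if j = k then (1:ℝ) else 0 := horth
  calc (∑ j, d j • w j) ⬝ᵥ (∑ k, c k • w k)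
      = ∑ i, ∑ j, ∑ k, (d j * w j i) * (c k * w k i) := by
        simp only [dotProduct, Finset.sum_apply, Pi.smul_apply, smul_eq_mul, Finset.sum_mul_sum]
    _ = ∑ j, ∑ k, (d j * c k) * ∑ i, w j i * w k i := by
        rw [Finset.sum_comm]
        refine Finset.sum_congr rfl fun j _ => ?_
        rw [Finset.sum_comm]
        refine Finset.sum_congr rfl fun k _ => ?_
        rw [Finset.mul_sum]
        exact Finset.sum_congr rfl fun i _ => by ring
    _ = ∑ j, d j * c j := by simp [h]

lemma quad_eq (b : OrthonormalBasis (Fin n) ℝ (EuclideanSpace ℝ (Fin n)))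
    (M : Matrix (Fin n) (Fin n) ℝ) (e : Fin n → ℝ)
    (hM : ∀ j, M *ᵥ (fun i => b j i) = e j • (fun i => b j i : Fin n → ℝ))
    (x : EuclideanSpace ℝ (Fin n)) :
    (M *ᵥ x) ⬝ᵥ x = ∑ j, e j * (b.repr x j)^2 ∧ x ⬝ᵥ x = ∑ j, (b.repr x j)^2 := by
  classical
  set w : Fin n → Fin n → ℝ := fun j i => b j i with hw
  set d : Fin n → ℝ := fun j => b.repr x j with hdd
  have horth : ∀ j k, w j ⬝ᵥ w k = if j = k then (1:ℝ) else 0 := by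
    intro j k
    have h1 : ⟪b j, b k⟫ = if j = k then (1:ℝ) else 0 := orthonormal_iff_ite.mp b.orthonormal j k
    have h2 : ⟪b j, b k⟫ = w j ⬝ᵥ w k := by
      simp [dotProduct, PiLp.inner_apply, RCLike.inner_apply, hw]
      exact Finset.sum_congr rfl fun _ _ => mul_comm _ _
    rw [← h2, h1]
  have hx : (x : Fin n → ℝ) = ∑ j, d j • w j := by
    conv_lhs => rw [← b.sum_repr x]
    simp [hdd, hw]
  have hMx : M *ᵥ (x : Fin n → ℝ) = ∑ j, (d j * e j) • w j := by
    rw [hx]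
    rw [show (M *ᵥ ∑ j, d j • w j) = ∑ j, d j • (M *ᵥ w j) by
      simp only [← Matrix.mulVecLin_apply, map_sum, _root_.map_smul]]
    exact Finset.sum_congr rfl fun j _ => by rw [hM j, smul_smul]
  constructor
  · rw [hMx]
    nth_rewrite 1 [hx]
    rw [dot_sums w horth]
    exact Finset.sum_congr rfl fun j _ => by ring
  · nth_rewrite 1 [hx]
    nth_rewrite 1 [hx]
    rw [dot_sums w horth]
    exact Finset.sum_congr rfl fun j _ => by ring

lemma quad_ge_on_span (b : OrthonormalBasis (Fin n) ℝ (EuclideanSpace ℝ (Fin n)))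
    (M : Matrix (Fin n) (Fin n) ℝ) (e : Fin n → ℝ)
    (hM : ∀ j, M *ᵥ (fun i => b j i) = e j • (fun i => b j i : Fin n → ℝ))
    (S : Finset (Fin n)) (c : ℝ) (hc : ∀ j ∈ S, c ≤ e j)
    {x : EuclideanSpace ℝ (Fin n)} (hx : x ∈ Submodule.span ℝ (⇑b '' ↑S)) :
    c * (x ⬝ᵥ x) ≤ (M *ᵥ x) ⬝ᵥ x := by
  classical
  obtain ⟨h1, h2⟩ := quad_eq b M e hM x
  have hsupp : ∀ j, j ∉ S → b.repr x j = 0 := by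
    intro j hj
    have hmem : x ∈ Submodule.span ℝ (⇑b.toBasis '' ↑S) := by rwa [b.coe_toBasis]
    have hsub := (Module.Basis.mem_span_image b.toBasis).mp hmem
    by_contra h0
    exact hj (hsub (Finsupp.mem_support_iff.mpr (by rwa [b.coe_toBasis_repr_apply])))
  rw [h1, h2, Finset.mul_sum]
  apply Finset.sum_le_sum
  intro j _
  by_cases hj : j ∈ S
  · exact mul_le_mul_of_nonneg_right (hc j hj) (sq_nonneg _)
  · rw [hsupp j hj]; simp

lemma quad_le_on_span (b : OrthonormalBasis (Fin n) ℝ (EuclideanSpace ℝ (Fin n)))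
    (M : Matrix (Fin n) (Fin n) ℝ) (e : Fin n → ℝ)
    (hM : ∀ j, M *ᵥ (fun i => b j i) = e j • (fun i => b j i : Fin n → ℝ))
    (S : Finset (Fin n)) (c : ℝ) (hc : ∀ j ∈ S, e j ≤ c)
    {x : EuclideanSpace ℝ (Fin n)} (hx : x ∈ Submodule.span ℝ (⇑b '' ↑S)) :
    (M *ᵥ x) ⬝ᵥ x ≤ c * (x ⬝ᵥ x) := by
  classical
  obtain ⟨h1, h2⟩ := quad_eq b M e hM x
  have hsupp : ∀ j, j ∉ S → b.repr x j = 0 := by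
    intro j hj
    have hmem : x ∈ Submodule.span ℝ (⇑b.toBasis '' ↑S) := by rwa [b.coe_toBasis]
    have hsub := (Module.Basis.mem_span_image b.toBasis).mp hmem
    by_contra h0
    exact hj (hsub (Finsupp.mem_support_iff.mpr (by rwa [b.coe_toBasis_repr_apply])))
  rw [h1, h2, Finset.mul_sum]
  apply Finset.sum_le_sum
  intro j _
  by_cases hj : j ∈ S
  · exact mul_le_mul_of_nonneg_right (hc j hj) (sq_nonneg _)
  · rw [hsupp j hj]; simp

lemma vecMulVec_quad (v : Fin n → ℝ) (x : Fin n → ℝ) :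
    (Matrix.vecMulVec v v *ᵥ x) ⬝ᵥ x = (v ⬝ᵥ x)^2 := by
  have h1 : Matrix.vecMulVec v v *ᵥ x = (v ⬝ᵥ x) • v := by
    funext i
    simp [Matrix.mulVec, Matrix.vecMulVec_apply, dotProduct, Finset.mul_sum, mul_comm,
      mul_assoc, mul_left_comm]
  rw [h1, smul_dotProduct, smul_eq_mul, sq]


lemma isSymm_isHermitian {M : Matrix (Fin n) (Fin n) ℝ} (h : M.IsSymm) : M.IsHermitian := by
  ext i j
  rw [Matrix.conjTranspose_apply, star_trivial]
  exact congrFun (congrFun h i) j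

/-- Cauchy interlacing for a rank-one update: the eigenvalues of `A` interlace
those of `A + v vᵀ`. -/
theorem interlacing_rank_one_update
    {n : ℕ} (A : Matrix (Fin n) (Fin n) ℝ) (hA : A.IsSymm)
    (v : Fin n → ℝ)
    (l m : Fin n → ℝ) (hl : Antitone l) (hm : Antitone m)
    (hlA : A.charpoly = ∏ i : Fin n, (Polynomial.X - Polynomial.C (l i)))
    (hmB : (A + Matrix.vecMulVec v v).charpoly
      = ∏ i : Fin n, (Polynomial.X - Polynomial.C (m i))) :
    (∀ i : Fin n, l i ≤ m i) ∧
      (∀ i j : Fin n, (i : ℕ) + 1 = (j : ℕ) → m j ≤ l i) := by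
  classical
  set B := A + Matrix.vecMulVec v v with hBdef
  have hBsymm : B.IsSymm := by
    have h1 : (Matrix.vecMulVec v v).IsSymm := by
      ext i j
      simp [Matrix.transpose_apply, Matrix.vecMulVec_apply, mul_comm]
    rw [hBdef, Matrix.IsSymm, Matrix.transpose_add, hA, h1]
  have hAH : A.IsHermitian := isSymm_isHermitian hA
  have hBH : B.IsHermitian := isSymm_isHermitian hBsymm
  set bA := hAH.eigenvectorBasis with hbA
  set eA := hAH.eigenvalues with heA
  set bB := hBH.eigenvectorBasis with hbB
  set eB := hBH.eigenvalues with heB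
  have hMeA : ∀ j, A *ᵥ (fun i => bA j i) = eA j • (fun i => bA j i : Fin n → ℝ) :=
    fun j => hAH.mulVec_eigenvectorBasis j
  have hMeB : ∀ j, B *ᵥ (fun i => bB j i) = eB j • (fun i => bB j i : Fin n → ℝ) :=
    fun j => hBH.mulVec_eigenvectorBasis j
  have hlm : Multiset.map l Finset.univ.val = Multiset.map eA Finset.univ.val :=
    multiset_eq_of_prod_eq l eA (hlA.symm.trans (charpoly_herm hAH))
  have hmm : Multiset.map m Finset.univ.val = Multiset.map eB Finset.univ.val :=
    multiset_eq_of_prod_eq m eB (hmB.symm.trans (charpoly_herm hBH))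
  -- quadratic form comparison
  have hquadAB : ∀ x : EuclideanSpace ℝ (Fin n),
      (B *ᵥ x) ⬝ᵥ x = (A *ᵥ x) ⬝ᵥ x + (v ⬝ᵥ x)^2 := by
    intro x
    rw [hBdef, Matrix.add_mulVec, add_dotProduct, vecMulVec_quad]
  constructor
  · -- l i ≤ m i
    intro i
    by_contra hcon
    push_neg at hcon
    set S₁ : Finset (Fin n) := Finset.univ.filter (fun j => l i ≤ eA j) with hS₁
    set S₂ : Finset (Fin n) := Finset.univ.filter (fun j => eB j ≤ m i) with hS₂
    have h₁ : (i : ℕ) + 1 ≤ S₁.card := by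
      rw [hS₁, ← card_filter_eq_of_map_eq hlm (fun t => l i ≤ t)]
      exact count_ge_of_antitone hl i (l i) le_rfl
    have h₂ : n - (i : ℕ) ≤ S₂.card := by
      rw [hS₂, ← card_filter_eq_of_map_eq hmm (fun t => t ≤ m i)]
      exact count_le_of_antitone hm i (m i) le_rfl
    set W₁ := Submodule.span ℝ (⇑bA '' ↑S₁) with hW₁
    set W₂ := Submodule.span ℝ (⇑bB '' ↑S₂) with hW₂
    have hf₁ : Module.finrank ℝ W₁ = S₁.card := finrank_span_onb bA S₁
    have hf₂ : Module.finrank ℝ W₂ = S₂.card := finrank_span_onb bB S₂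
    have hpos : 0 < Module.finrank ℝ (W₁ ⊓ W₂ : Submodule ℝ _) := by
      have hlow := finrank_inf_lower W₁ W₂
      have hin : (i : ℕ) < n := i.isLt
      omega
    obtain ⟨x, hxW, hx0⟩ := exists_ne_zero_mem _ hpos
    obtain ⟨hx1, hx2⟩ := Submodule.mem_inf.mp hxW
    have dpos : 0 < x ⬝ᵥ x := dot_self_pos hx0
    have qA := quad_ge_on_span bA A eA hMeA S₁ (l i)
      (fun j hj => (Finset.mem_filter.mp hj).2) hx1
    have qB := quad_le_on_span bB B eB hMeB S₂ (m i)
      (fun j hj => (Finset.mem_filter.mp hj).2) hx2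
    have qAB := hquadAB x
    nlinarith [sq_nonneg (v ⬝ᵥ x)]
  · -- m j ≤ l i for j = i+1
    intro i j hij
    by_contra hcon
    push_neg at hcon
    set S₁ : Finset (Fin n) := Finset.univ.filter (fun k => m j ≤ eB k) with hS₁
    set S₃ : Finset (Fin n) := Finset.univ.filter (fun k => eA k ≤ l i) with hS₃
    have h₁ : (j : ℕ) + 1 ≤ S₁.card := by
      rw [hS₁, ← card_filter_eq_of_map_eq hmm (fun t => m j ≤ t)]
      exact count_ge_of_antitone hm j (m j) le_rfl
    have h₃ : n - (i : ℕ) ≤ S₃.card := by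
      rw [hS₃, ← card_filter_eq_of_map_eq hlm (fun t => t ≤ l i)]
      exact count_le_of_antitone hl i (l i) le_rfl
    set v' : EuclideanSpace ℝ (Fin n) := WithLp.toLp 2 v with hv'
    set W₁ := Submodule.span ℝ (⇑bB '' ↑S₁) with hW₁
    set Wv := (Submodule.span ℝ {v'})ᗮ with hWv
    set W₃ := Submodule.span ℝ (⇑bA '' ↑S₃) with hW₃
    have hf₁ : Module.finrank ℝ W₁ = S₁.card := finrank_span_onb bB S₁
    have hf₃ : Module.finrank ℝ W₃ = S₃.card := finrank_span_onb bA S₃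
    have hfv : n - 1 ≤ Module.finrank ℝ Wv := by
      rw [hWv]
      have horth := Submodule.finrank_add_finrank_orthogonal
        (Submodule.span ℝ ({v'} : Set (EuclideanSpace ℝ (Fin n))))
      have hle : Module.finrank ℝ
          (Submodule.span ℝ ({v'} : Set (EuclideanSpace ℝ (Fin n)))) ≤ 1 := by
        rcases eq_or_ne v' 0 with h0 | h0
        · rw [h0, Submodule.span_zero_singleton]
          simp
        · rw [finrank_span_singleton h0]
      have htot : Module.finrank ℝ (EuclideanSpace ℝ (Fin n)) = n := by simp
      omega
    have hpos : 0 < Module.finrank ℝ ((W₁ ⊓ Wv) ⊓ W₃ : Submodule ℝ _) := by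
      have hlow1 := finrank_inf_lower W₁ Wv
      have hlow2 := finrank_inf_lower (W₁ ⊓ Wv) W₃
      have hjn : (j : ℕ) < n := j.isLt
      omega
    obtain ⟨x, hxW, hx0⟩ := exists_ne_zero_mem _ hpos
    obtain ⟨hx12, hx3⟩ := Submodule.mem_inf.mp hxW
    obtain ⟨hx1, hx2⟩ := Submodule.mem_inf.mp hx12
    have dpos : 0 < x ⬝ᵥ x := dot_self_pos hx0
    have qB := quad_ge_on_span bB B eB hMeB S₁ (m j)
      (fun k hk => (Finset.mem_filter.mp hk).2) hx1
    have qA := quad_le_on_span bA A eA hMeA S₃ (l i)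
      (fun k hk => (Finset.mem_filter.mp hk).2) hx3
    have horthx : v ⬝ᵥ x = 0 := by
      have hmem := (Submodule.mem_orthogonal (Submodule.span ℝ {v'}) x).mp hx2
      have := hmem v' (Submodule.mem_span_singleton_self v')
      rw [← this]
      simp [dotProduct, PiLp.inner_apply, RCLike.inner_apply, hv']
      exact Finset.sum_congr rfl fun _ _ => mul_comm _ _
    have qAB := hquadAB x
    rw [horthx] at qAB
    nlinarith
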